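/- Let G be a torsion GGS group and H < G a proper subgroup of type II generated by a finite set S, and let M be the maximal b-length of elements of S. Then for every first-level vertex v, the subgroup φ_v(H) is generated by the set φ_v(S), all of whose elements have b-length at most (M+1)/2. In particular, if M > 1 then the elements of φ_v(S) all have b-length strictly less than M. -/

import Mathlib

/-- Vertices of the rooted regular tree over alphabet `A`: finite words in `A`. -/
abbrev Vert (A : Type*) := List A

/-- The automorphism group of the rooted regular tree with vertex set `Vert A`:
length-preserving permutations of the vertices that preserve the prefix order. -/
def treeAut (A : Type*) : Subgroup (Equiv.Perm (Vert A)) where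
  carrier := { g | (∀ v : Vert A, (g v).length = v.length) ∧
    ∀ v w : Vert A, v <+: w ↔ g v <+: g w }
  one_mem' := ⟨fun _ => rfl, fun _ _ => Iff.rfl⟩
  mul_mem' := by
    rintro g h ⟨hg1, hg2⟩ ⟨hh1, hh2⟩
    refine ⟨fun v => ?_, fun v w => ?_⟩
    · simp only [Equiv.Perm.mul_apply, hg1, hh1]
    · simpa only [Equiv.Perm.mul_apply] using (hh2 v w).trans (hg2 (h v) (h w))
  inv_mem' := by
    rintro g ⟨hg1, hg2⟩
    refine ⟨fun v => ?_, fun v w => ?_⟩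
    · have h1 := hg1 (g⁻¹ v)
      rw [(show ∀ x, g (g⁻¹ x) = x from fun x => g.apply_symm_apply x)] at h1
      exact h1.symm
    · have h2 := hg2 (g⁻¹ v) (g⁻¹ w)
      rw [(show ∀ x, g (g⁻¹ x) = x from fun x => g.apply_symm_apply x), (show ∀ x, g (g⁻¹ x) = x from fun x => g.apply_symm_apply x)] at h2
      exact h2.symm

open scoped Classical in
/-- The section `φ_v(g)` of an automorphism `g` at the vertex `v`: the unique
permutation `s` with `g (v ++ w) = g v ++ s w` for all `w` (it exists and is unique
whenever `g` is a tree automorphism). -/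
noncomputable def sect {A : Type*} (g : Equiv.Perm (Vert A)) (v : Vert A) :
    Equiv.Perm (Vert A) :=
  if h : ∃ s : Equiv.Perm (Vert A), ∀ w : Vert A, g (v ++ w) = g v ++ s w then h.choose else 1

/-- The `n`-th level of the tree: words of length `n`. -/
def level (A : Type*) (n : ℕ) : Set (Vert A) := { v | v.length = n }

/-- The pointwise stabilizer in `G` of a set `S` of vertices. -/
def stabSet {A : Type*} (G : Subgroup (Equiv.Perm (Vert A))) (S : Set (Vert A)) :
    Subgroup (Equiv.Perm (Vert A)) where
  carrier := { g | g ∈ G ∧ ∀ v ∈ S, g v = v }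
  one_mem' := ⟨G.one_mem, fun _ _ => rfl⟩
  mul_mem' := by
    rintro g h ⟨hg, hg2⟩ ⟨hh, hh2⟩
    exact ⟨G.mul_mem hg hh, fun v hv => by
      simp only [Equiv.Perm.mul_apply, hh2 v hv, hg2 v hv]⟩
  inv_mem' := by
    rintro g ⟨hg, hg2⟩
    refine ⟨G.inv_mem hg, fun v hv => ?_⟩
    conv_lhs => rw [← hg2 v hv]
    exact g.symm_apply_apply v

/-- The stabilizer in `G` of a single vertex `v`. -/
def vstab {A : Type*} (G : Subgroup (Equiv.Perm (Vert A))) (v : Vert A) :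
    Subgroup (Equiv.Perm (Vert A)) := stabSet G {v}

/-- The pointwise stabilizer in `G` of the `n`-th level. -/
def lstab {A : Type*} (G : Subgroup (Equiv.Perm (Vert A))) (n : ℕ) :
    Subgroup (Equiv.Perm (Vert A)) := stabSet G (level A n)

/-- The rigid stabilizer of a vertex `v` in `G`: elements of `G` acting trivially
outside the subtree rooted at `v`. -/
def rist {A : Type*} (G : Subgroup (Equiv.Perm (Vert A))) (v : Vert A) :
    Subgroup (Equiv.Perm (Vert A)) where
  carrier := { g | g ∈ G ∧ ∀ w : Vert A, ¬ v <+: w → g w = w }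
  one_mem' := ⟨G.one_mem, fun _ _ => rfl⟩
  mul_mem' := by
    rintro g h ⟨hg, hg2⟩ ⟨hh, hh2⟩
    exact ⟨G.mul_mem hg hh, fun w hw => by
      simp only [Equiv.Perm.mul_apply, hh2 w hw, hg2 w hw]⟩
  inv_mem' := by
    rintro g ⟨hg, hg2⟩
    refine ⟨G.inv_mem hg, fun w hw => ?_⟩
    conv_lhs => rw [← hg2 w hw]
    exact g.symm_apply_apply w

/-- The rigid stabilizer of the `n`-th level: the subgroup generated by the rigid
stabilizers of the vertices of level `n`. -/
def ristLevel {A : Type*} (G : Subgroup (Equiv.Perm (Vert A))) (n : ℕ) :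
    Subgroup (Equiv.Perm (Vert A)) := ⨆ v ∈ level A n, rist G v

/-- The subgroup `φ_v(H)` generated by (equivalently, consisting of, when `H`
stabilizes `v`) the sections at `v` of the elements of `H`. -/
def sectGrp {A : Type*} (H : Subgroup (Equiv.Perm (Vert A))) (v : Vert A) :
    Subgroup (Equiv.Perm (Vert A)) :=
  Subgroup.closure ((fun g => sect g v) '' (H : Set (Equiv.Perm (Vert A))))

/-- A transversal of the tree: a finite set of vertices met exactly once by every
infinite ray from the root. -/
def IsTransversal (A : Type*) (X : Set (Vert A)) : Prop :=
  X.Finite ∧ ∀ ω : ℕ → A, ∃! n : ℕ, (List.ofFn fun i : Fin n => ω i.val) ∈ X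

/-- The subgroup induction property. -/
def HasSGIP {A : Type*} (G : Subgroup (Equiv.Perm (Vert A))) : Prop :=
  ∀ H : Subgroup (Equiv.Perm (Vert A)), H ≤ G → H.FG →
    ∃ X : Set (Vert A), IsTransversal A X ∧ ∀ v ∈ X,
      sectGrp (stabSet H X) v = ⊥ ∨
      (sectGrp (stabSet H X) v).relIndex (sectGrp (vstab G v) v) ≠ 0

/-- `G` acts transitively on every level of the tree. -/
def LevelTransitive {A : Type*} (G : Subgroup (Equiv.Perm (Vert A))) : Prop :=
  ∀ v w : Vert A, v.length = w.length → ∃ g ∈ G, g v = w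

/-- Weakly branch: level-transitive with all rigid vertex stabilizers infinite. -/
def IsWeaklyBranch {A : Type*} (G : Subgroup (Equiv.Perm (Vert A))) : Prop :=
  LevelTransitive G ∧ ∀ v : Vert A, (rist G v : Set (Equiv.Perm (Vert A))).Infinite

/-- Branch: weakly branch and every level rigid stabilizer has finite index in `G`. -/
def IsBranch {A : Type*} (G : Subgroup (Equiv.Perm (Vert A))) : Prop :=
  IsWeaklyBranch G ∧ ∀ n : ℕ, (ristLevel G n).relIndex G ≠ 0

/-- Self-similar: all sections of vertex stabilizers land in `G`. -/
def SelfSimilar {A : Type*} (G : Subgroup (Equiv.Perm (Vert A))) : Prop :=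
  ∀ v : Vert A, sectGrp (vstab G v) v ≤ G

/-- Self-replicating: `φ_v(Stab_G(v)) = G` for every vertex `v`. -/
def SelfReplicating {A : Type*} (G : Subgroup (Equiv.Perm (Vert A))) : Prop :=
  ∀ v : Vert A, sectGrp (vstab G v) v = G

/-- Strongly self-replicating: self-similar and `φ_v(Stab_G(L_n)) = G` for every `n`
and every vertex `v` of level `n`. -/
def StronglySelfReplicating {A : Type*} (G : Subgroup (Equiv.Perm (Vert A))) : Prop :=
  SelfSimilar G ∧ ∀ (n : ℕ) (v : Vert A), v.length = n → sectGrp (lstab G n) v = G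

/-- The congruence subgroup property: every finite-index subgroup of `G` contains
some level stabilizer. -/
def HasCSP {A : Type*} (G : Subgroup (Equiv.Perm (Vert A))) : Prop :=
  ∀ K : Subgroup (Equiv.Perm (Vert A)), K ≤ G → K.relIndex G ≠ 0 →
    ∃ n : ℕ, lstab G n ≤ K

/-- A group is just infinite if it is infinite and all its proper quotients are
finite, i.e. every nontrivial normal subgroup has finite index. -/
def JustInfinite (G : Type*) [Group G] : Prop :=
  Infinite G ∧ ∀ N : Subgroup G, N.Normal → N ≠ ⊥ → N.index ≠ 0

/-- `Φ_F(G)`: the intersection of all maximal subgroups of finite index of `G`. -/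
def PhiF (G : Type*) [Group G] : Subgroup G :=
  ⨅ M ∈ { M : Subgroup G | IsCoatom M ∧ M.index ≠ 0 }, M

/-- Two groups are commensurable if they have isomorphic finite-index subgroups. -/
def CommGroups (G₁ : Type*) (G₂ : Type*) [Group G₁] [Group G₂] : Prop :=
  ∃ (H₁ : Subgroup G₁) (H₂ : Subgroup G₂),
    H₁.index ≠ 0 ∧ H₂.index ≠ 0 ∧ Nonempty (H₁ ≃* H₂)
/-- The rooted automorphism `a` of the `p`-regular tree: the cyclic permutation
`(1 2 … p)` of the first level (adding `1` to the first letter). -/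
def aPerm (p : ℕ) : Equiv.Perm (Vert (ZMod p)) where
  toFun := fun l => match l with
    | [] => ([] : Vert (ZMod p))
    | x :: w => (x + 1) :: w
  invFun := fun l => match l with
    | [] => ([] : Vert (ZMod p))
    | x :: w => (x - 1) :: w
  left_inv := by rintro (_ | ⟨x, w⟩) <;> simp
  right_inv := by rintro (_ | ⟨x, w⟩) <;> simp

/-- The recursively defined generator `b = (a^{e_0}, …, a^{e_{p-2}}, b)`. -/
def bFun (p : ℕ) (e : Fin (p - 1) → ZMod p) : Vert (ZMod p) → Vert (ZMod p)
  | [] => []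
  | x :: w =>
    if h : x.val < p - 1 then x :: (aPerm p ^ (e ⟨x.val, h⟩).val) w
    else x :: bFun p e w

/-- Inverse of `bFun`. -/
def bInvFun (p : ℕ) (e : Fin (p - 1) → ZMod p) : Vert (ZMod p) → Vert (ZMod p)
  | [] => []
  | x :: w =>
    if h : x.val < p - 1 then x :: ((aPerm p ^ (e ⟨x.val, h⟩).val)⁻¹ : Equiv.Perm (Vert (ZMod p))) w
    else x :: bInvFun p e w

/-- The generator `b` of the GGS group as a tree automorphism. -/
def bPerm (p : ℕ) (e : Fin (p - 1) → ZMod p) : Equiv.Perm (Vert (ZMod p)) where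
  toFun := bFun p e
  invFun := bInvFun p e
  left_inv := by
    intro l
    induction l with
    | nil => rfl
    | cons x w ih =>
      by_cases h : x.val < p - 1
      · simp [bFun, bInvFun, h]
      · simp [bFun, bInvFun, h, ih]
  right_inv := by
    intro l
    induction l with
    | nil => rfl
    | cons x w ih =>
      by_cases h : x.val < p - 1
      · simp [bFun, bInvFun, h]
      · simp [bFun, bInvFun, h, ih]

/-- The GGS group with defining vector `e`. -/
def GGSGroup (p : ℕ) (e : Fin (p - 1) → ZMod p) : Subgroup (Equiv.Perm (Vert (ZMod p))) :=
  Subgroup.closure {aPerm p, bPerm p e}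

/-- The derived subgroup `G'` of the GGS group, as a subgroup of the ambient
permutation group. -/
def GGSDerived (p : ℕ) (e : Fin (p - 1) → ZMod p) : Subgroup (Equiv.Perm (Vert (ZMod p))) :=
  (commutator ↥(GGSGroup p e)).map (GGSGroup p e).subtype

/-- `g` can be written as `a^{i_1} b^{j_1} ⋯ a^{i_n} b^{j_n} a^{i_{n+1}}`. -/
def bWordLe (p : ℕ) (e : Fin (p - 1) → ZMod p) (g : Equiv.Perm (Vert (ZMod p)))
    (n : ℕ) : Prop :=
  ∃ i j : ℕ → ℤ,
    g = ((List.range n).map fun k => aPerm p ^ i k * bPerm p e ^ j k).prod * aPerm p ^ i n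

/-- The `b`-length `|g|`: the least number of `b`-syllables needed to write `g`. -/
noncomputable def bLen (p : ℕ) (e : Fin (p - 1) → ZMod p)
    (g : Equiv.Perm (Vert (ZMod p))) : ℕ :=
  sInf { n : ℕ | bWordLe p e g n }

/-- The generating set `{a, a², …, a^{p-1}, b, b², …, b^{p-1}}`. -/
def GGSGens (p : ℕ) (e : Fin (p - 1) → ZMod p) : Set (Equiv.Perm (Vert (ZMod p))) :=
  { x | ∃ k : ℕ, 1 ≤ k ∧ k ≤ p - 1 ∧ (x = aPerm p ^ k ∨ x = bPerm p e ^ k) }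

/-- The total length `λ(g)`: word length with respect to all nontrivial powers of
`a` and of `b`. -/
noncomputable def totalLen (p : ℕ) (e : Fin (p - 1) → ZMod p)
    (g : Equiv.Perm (Vert (ZMod p))) : ℕ :=
  sInf { n : ℕ | ∃ f : Fin n → Equiv.Perm (Vert (ZMod p)),
    (∀ k, f k ∈ GGSGens p e) ∧ g = (List.ofFn f).prod }

/-- `α` and `β` are the exponents (mod `p`) with `g ≡ a^α b^β` modulo `G'`. -/
def IsAlphaBeta (p : ℕ) (e : Fin (p - 1) → ZMod p) (g : Equiv.Perm (Vert (ZMod p)))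
    (α β : ℕ) : Prop :=
  α < p ∧ β < p ∧ (aPerm p ^ α * bPerm p e ^ β)⁻¹ * g ∈ GGSDerived p e

/-- `H` is of type II: `HG'/G' = ⟨b^j G'⟩` for some `j ∈ {0,1}`. -/
def TypeII (p : ℕ) (e : Fin (p - 1) → ZMod p)
    (H : Subgroup (Equiv.Perm (Vert (ZMod p)))) : Prop :=
  ∃ j : ℕ, j ≤ 1 ∧
    H ⊔ GGSDerived p e = Subgroup.closure {bPerm p e ^ j} ⊔ GGSDerived p e

/-- `H` is of type III: `HG'/G' = ⟨a b^j G'⟩` for some `j ∈ {0,…,p-1}`. -/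
def TypeIII (p : ℕ) (e : Fin (p - 1) → ZMod p)
    (H : Subgroup (Equiv.Perm (Vert (ZMod p)))) : Prop :=
  ∃ j : ℕ, j < p ∧
    H ⊔ GGSDerived p e = Subgroup.closure {aPerm p * bPerm p e ^ j} ⊔ GGSDerived p e


theorem Equiv.Perm.apply_inv_self {α : Type*} (f : Equiv.Perm α) (x : α) : f (f⁻¹ x) = x :=
  f.apply_symm_apply x

theorem Equiv.Perm.inv_apply_self {α : Type*} (f : Equiv.Perm α) (x : α) : f⁻¹ (f x) = x :=
  f.symm_apply_apply x

section AuxLemmas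

open Equiv List

/-! ### Basic facts about `sect` -/

lemma sect_eq {A : Type*} (g : Equiv.Perm (Vert A)) (v : Vert A)
    (s : Equiv.Perm (Vert A)) (hs : ∀ w, g (v ++ w) = g v ++ s w) : sect g v = s := by
  classical
  have hex : ∃ s : Equiv.Perm (Vert A), ∀ w : Vert A, g (v ++ w) = g v ++ s w := ⟨s, hs⟩
  rw [sect, dif_pos hex]
  refine Equiv.ext fun w => ?_
  have h1 := hex.choose_spec w
  have h2 := hs w
  rw [h1] at h2
  exact List.append_cancel_left h2

/-- The subgroup of permutations all of whose sections exist. -/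
def goodSub (A : Type*) : Subgroup (Equiv.Perm (Vert A)) where
  carrier := {g | ∀ v : Vert A, ∃ s : Equiv.Perm (Vert A), ∀ w, g (v ++ w) = g v ++ s w}
  one_mem' := fun _ => ⟨1, fun _ => rfl⟩
  mul_mem' := by
    rintro g h hg hh v
    obtain ⟨sh, hsh⟩ := hh v
    obtain ⟨sg, hsg⟩ := hg (h v)
    refine ⟨sg * sh, fun w => ?_⟩
    simp only [Equiv.Perm.mul_apply, hsh, hsg]
  inv_mem' := by
    rintro g hg v
    obtain ⟨s, hs⟩ := hg (g⁻¹ v)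
    refine ⟨s⁻¹, fun w => ?_⟩
    have h1 : g (g⁻¹ v ++ s⁻¹ w) = v ++ w := by
      rw [hs, Equiv.Perm.apply_inv_self, Equiv.Perm.apply_inv_self]
    rw [← h1, Equiv.Perm.inv_apply_self]

lemma mem_goodSub {A : Type*} {g : Equiv.Perm (Vert A)} :
    g ∈ goodSub A ↔ ∀ v : Vert A, ∃ s : Equiv.Perm (Vert A), ∀ w, g (v ++ w) = g v ++ s w :=
  Iff.rfl

lemma sect_spec {A : Type*} {g : Equiv.Perm (Vert A)} (hg : g ∈ goodSub A) (v w : Vert A) :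
    g (v ++ w) = g v ++ sect g v w := by
  obtain ⟨s, hs⟩ := hg v
  rw [sect_eq g v s hs]
  exact hs w

lemma sect_one {A : Type*} (v : Vert A) : sect (1 : Equiv.Perm (Vert A)) v = 1 :=
  sect_eq _ _ _ (fun _ => rfl)

lemma sect_mul {A : Type*} {g h : Equiv.Perm (Vert A)} (hg : g ∈ goodSub A)
    (hh : h ∈ goodSub A) (v : Vert A) :
    sect (g * h) v = sect g (h v) * sect h v := by
  refine sect_eq _ _ _ (fun w => ?_)
  simp only [Equiv.Perm.mul_apply]
  rw [sect_spec hh v w, sect_spec hg (h v)]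

lemma sect_inv {A : Type*} {g : Equiv.Perm (Vert A)} (hg : g ∈ goodSub A) {v : Vert A}
    (hv : g v = v) : sect g⁻¹ v = (sect g v)⁻¹ := by
  have hvi : g⁻¹ v = v := by conv_lhs => rw [← hv, Equiv.Perm.inv_apply_self]
  have h1 : sect (g * g⁻¹) v = sect g (g⁻¹ v) * sect g⁻¹ v :=
    sect_mul hg ((goodSub A).inv_mem hg) v
  rw [mul_inv_cancel, sect_one, hvi] at h1
  exact eq_inv_of_mul_eq_one_right h1.symm

lemma perm_fix_zpow {α : Type*} {g : Equiv.Perm α} {x : α} (h : g x = x) (z : ℤ) :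
    (g ^ z) x = x := by
  have hm : g ∈ MulAction.stabilizer (Equiv.Perm α) x := by
    rw [MulAction.mem_stabilizer_iff]; exact h
  exact zpow_mem hm z

lemma perm_fix_pow {α : Type*} {g : Equiv.Perm α} {x : α} (h : g x = x) (n : ℕ) :
    (g ^ n) x = x := by
  have := perm_fix_zpow h (n : ℤ)
  rwa [zpow_natCast] at this

lemma sect_zpow {A : Type*} {g : Equiv.Perm (Vert A)} (hg : g ∈ goodSub A) {v : Vert A}
    (hv : g v = v) (z : ℤ) : sect (g ^ z) v = (sect g v) ^ z := by
  induction z using Int.induction_on with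
  | zero => rw [zpow_zero, zpow_zero, sect_one]
  | succ k ih =>
    have : g ^ ((k : ℤ) + 1) = g ^ (k : ℤ) * g := by rw [zpow_add_one]
    rw [this, sect_mul (zpow_mem hg _) hg, hv, ih, zpow_add_one]
  | pred k ih =>
    have : g ^ (-(k : ℤ) - 1) = g ^ (-(k : ℤ)) * g⁻¹ := by rw [zpow_sub_one]
    rw [this, sect_mul (zpow_mem hg _) ((goodSub A).inv_mem hg), sect_inv hg hv, zpow_sub_one]
    congr 1
    rw [show g⁻¹ v = v from by conv_lhs => rw [← hv, Equiv.Perm.inv_apply_self]]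
    exact ih

end AuxLemmas

section AuxLemmas2

open Equiv List

variable {p : ℕ} {e : Fin (p - 1) → ZMod p}

lemma aPerm_nil (p : ℕ) : aPerm p [] = ([] : Vert (ZMod p)) := rfl

lemma aPerm_cons (p : ℕ) (x : ZMod p) (w : Vert (ZMod p)) :
    aPerm p (x :: w) = (x + 1) :: w := rfl

lemma aPerm_pow_nil (n : ℕ) : (aPerm p ^ n) [] = ([] : Vert (ZMod p)) :=
  perm_fix_pow rfl n

lemma aPerm_pow_cons (n : ℕ) (x : ZMod p) (w : Vert (ZMod p)) :
    (aPerm p ^ n) (x :: w) = (x + n) :: w := by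
  induction n with
  | zero => simp
  | succ k ih =>
    rw [pow_succ', Equiv.Perm.mul_apply, ih, aPerm_cons]
    push_cast
    ring_nf

lemma aPerm_zpow_nil (z : ℤ) : (aPerm p ^ z) [] = ([] : Vert (ZMod p)) :=
  perm_fix_zpow rfl z

lemma aPerm_zpow_cons (z : ℤ) (x : ZMod p) (w : Vert (ZMod p)) :
    (aPerm p ^ z) (x :: w) = (x + z) :: w := by
  obtain ⟨n, rfl | rfl⟩ := z.eq_nat_or_neg
  · rw [zpow_natCast, aPerm_pow_cons]
    push_cast; ring_nf
  · have h1 : (aPerm p ^ n) ((x - n) :: w) = x :: w := by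
      rw [aPerm_pow_cons]; congr 1; ring
    rw [zpow_neg, zpow_natCast, ← h1, Equiv.Perm.inv_apply_self]
    congr 1; push_cast; ring

lemma bPerm_apply (l : Vert (ZMod p)) : bPerm p e l = bFun p e l := rfl

lemma bPerm_fix (x : ZMod p) : bPerm p e [x] = [x] := by
  rw [bPerm_apply]
  by_cases h : x.val < p - 1
  · simp only [bFun, dif_pos h]
    rw [show (aPerm p ^ (e ⟨x.val, h⟩).val) [] = [] from aPerm_pow_nil _]
  · simp only [bFun, dif_neg h]

lemma aPerm_mem_good : aPerm p ∈ goodSub (ZMod p) := by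
  intro v
  cases v with
  | nil => exact ⟨aPerm p, fun w => rfl⟩
  | cons x u => exact ⟨1, fun w => rfl⟩

lemma bPerm_mem_good : bPerm p e ∈ goodSub (ZMod p) := by
  intro v
  induction v with
  | nil => exact ⟨bPerm p e, fun w => rfl⟩
  | cons x u ih =>
    by_cases h : x.val < p - 1
    · obtain ⟨s, hs⟩ := (pow_mem (aPerm_mem_good (p := p)) (e ⟨x.val, h⟩).val) u
      refine ⟨s, fun w => ?_⟩
      show bFun p e (x :: (u ++ w)) = bFun p e (x :: u) ++ s w
      simp only [bFun, dif_pos h]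
      rw [hs w]
      rfl
    · obtain ⟨s, hs⟩ := ih
      refine ⟨s, fun w => ?_⟩
      show bFun p e (x :: (u ++ w)) = bFun p e (x :: u) ++ s w
      simp only [bFun, dif_neg h]
      rw [show bFun p e (u ++ w) = bFun p e u ++ s w from hs w]
      rfl

/-- The subgroup of permutations shifting the first level by a constant. -/
def shiftSub (p : ℕ) : Subgroup (Equiv.Perm (Vert (ZMod p))) where
  carrier := {g | ∃ c : ZMod p, ∀ x : ZMod p, g [x] = [x + c]}
  one_mem' := ⟨0, fun x => by simp⟩
  mul_mem' := by
    rintro g h ⟨cg, hcg⟩ ⟨ch, hch⟩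
    refine ⟨ch + cg, fun x => ?_⟩
    rw [Equiv.Perm.mul_apply, hch, hcg]
    congr 1; ring
  inv_mem' := by
    rintro g ⟨c, hc⟩
    refine ⟨-c, fun x => ?_⟩
    have h1 : g [x - c] = [x] := by rw [hc]; congr 1; ring
    rw [← h1, Equiv.Perm.inv_apply_self]
    congr 1; ring

lemma shift_inv_apply {g : Equiv.Perm (Vert (ZMod p))} {c : ZMod p}
    (hc : ∀ x : ZMod p, g [x] = [x + c]) (x : ZMod p) : g⁻¹ [x] = [x - c] := by
  have h1 : g [x - c] = [x] := by rw [hc]; congr 1; ring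
  rw [← h1, Equiv.Perm.inv_apply_self]

lemma GGS_le_good_shift : GGSGroup p e ≤ goodSub (ZMod p) ⊓ shiftSub p := by
  rw [GGSGroup, Subgroup.closure_le]
  rintro g (rfl | rfl)
  · exact ⟨aPerm_mem_good, 1, fun x => rfl⟩
  · exact ⟨bPerm_mem_good, 0, fun x => by rw [bPerm_fix]; simp⟩

lemma mem_stabL1 {g : Equiv.Perm (Vert (ZMod p))} (h : ∀ x : ZMod p, g [x] = [x]) :
    g ∈ stabSet ⊤ (level (ZMod p) 1) :=
  ⟨trivial, fun v hv => by
    obtain ⟨x, rfl⟩ := List.length_eq_one_iff.mp hv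
    exact h x⟩

lemma stabL1_apply {g : Equiv.Perm (Vert (ZMod p))}
    (hg : g ∈ stabSet ⊤ (level (ZMod p) 1)) (x : ZMod p) : g [x] = [x] :=
  hg.2 [x] rfl

lemma derived_le_stabL1 : GGSDerived p e ≤ stabSet ⊤ (level (ZMod p) 1) := by
  rw [GGSDerived, commutator_def, Subgroup.map_commutator]
  have htop : Subgroup.map (GGSGroup p e).subtype ⊤ = GGSGroup p e :=
    (MonoidHom.range_eq_map _).symm.trans (Subgroup.range_subtype _)
  rw [htop, Subgroup.commutator_le]
  intro g hg h hh
  obtain ⟨cg, hcg⟩ := (GGS_le_good_shift hg).2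
  obtain ⟨ch, hch⟩ := (GGS_le_good_shift hh).2
  refine mem_stabL1 fun x => ?_
  rw [commutatorElement_def]
  simp only [Equiv.Perm.mul_apply]
  rw [shift_inv_apply hch, shift_inv_apply hcg, hch, hcg]
  congr 1; ring

end AuxLemmas2

section AuxLemmas3

open Equiv List

variable {p : ℕ} {e : Fin (p - 1) → ZMod p}

/-- The word `a^{i 0} b^{j 0} ⋯ a^{i (n-1)} b^{j (n-1)} a^{i n}`. -/
def ggsWord (p : ℕ) (e : Fin (p - 1) → ZMod p) (i j : ℕ → ℤ) (n : ℕ) :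
    Equiv.Perm (Vert (ZMod p)) :=
  ((List.range n).map fun k => aPerm p ^ i k * bPerm p e ^ j k).prod * aPerm p ^ i n

lemma bWordLe_iff {g : Equiv.Perm (Vert (ZMod p))} {n : ℕ} :
    bWordLe p e g n ↔ ∃ i j : ℕ → ℤ, g = ggsWord p e i j n := Iff.rfl

lemma ggsWord_zero (i j : ℕ → ℤ) : ggsWord p e i j 0 = aPerm p ^ i 0 := by
  simp [ggsWord]

lemma ggsWord_succ (i j : ℕ → ℤ) (n : ℕ) :
    ggsWord p e i j (n + 1) =
      aPerm p ^ i 0 * bPerm p e ^ j 0 * ggsWord p e (i ∘ Nat.succ) (j ∘ Nat.succ) n := by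
  rw [ggsWord, ggsWord, List.range_succ_eq_map, List.map_cons, List.prod_cons, List.map_map]
  simp only [Function.comp]
  rw [mul_assoc, mul_assoc, mul_assoc]
  rfl

/-- Abbreviation for `bWordLe` as existence of a word. -/
def BW (p : ℕ) (e : Fin (p - 1) → ZMod p) (g : Equiv.Perm (Vert (ZMod p))) (m : ℕ) : Prop :=
  ∃ i j : ℕ → ℤ, g = ggsWord p e i j m

lemma bw_azpow (z : ℤ) : BW p e (aPerm p ^ z) 0 :=
  ⟨fun _ => z, fun _ => 0, by rw [ggsWord_zero]⟩

lemma bw_one : BW p e 1 0 := by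
  have := bw_azpow (p := p) (e := e) 0
  rwa [zpow_zero] at this

lemma bw_a_mul {g : Equiv.Perm (Vert (ZMod p))} {m : ℕ} (z : ℤ) (h : BW p e g m) :
    BW p e (aPerm p ^ z * g) m := by
  obtain ⟨i, j, rfl⟩ := h
  cases m with
  | zero =>
    refine ⟨fun _ => z + i 0, j, ?_⟩
    rw [ggsWord_zero, ggsWord_zero, zpow_add]
  | succ m =>
    refine ⟨fun k => Nat.rec (z + i 0) (fun k' _ => i (k' + 1)) k, j, ?_⟩
    rw [ggsWord_succ, ggsWord_succ]
    show aPerm p ^ z * (aPerm p ^ i 0 * bPerm p e ^ j 0 * ggsWord p e (i ∘ Nat.succ) (j ∘ Nat.succ) m) =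
      aPerm p ^ (z + i 0) * bPerm p e ^ j 0 * ggsWord p e (i ∘ Nat.succ) (j ∘ Nat.succ) m
    rw [zpow_add]
    group

lemma bw_prepend {g : Equiv.Perm (Vert (ZMod p))} {m : ℕ} (z y : ℤ) (h : BW p e g m) :
    BW p e (aPerm p ^ z * (bPerm p e ^ y * g)) (m + 1) := by
  obtain ⟨i, j, rfl⟩ := h
  refine ⟨fun k => Nat.rec z (fun k' _ => i k') k, fun k => Nat.rec y (fun k' _ => j k') k, ?_⟩
  rw [ggsWord_succ]
  show aPerm p ^ z * (bPerm p e ^ y * ggsWord p e i j m) =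
    aPerm p ^ z * bPerm p e ^ y * ggsWord p e i j m
  rw [mul_assoc]

lemma bw_bzpow_mul {g : Equiv.Perm (Vert (ZMod p))} {m : ℕ} (y : ℤ) (h : BW p e g m) :
    BW p e (bPerm p e ^ y * g) (m + 1) := by
  have := bw_prepend 0 y h
  rwa [zpow_zero, one_mul] at this

lemma bw_append {g : Equiv.Perm (Vert (ZMod p))} {m : ℕ} (y z : ℤ) (h : BW p e g m) :
    BW p e (g * bPerm p e ^ y * aPerm p ^ z) (m + 1) := by
  induction m generalizing g with
  | zero =>
    obtain ⟨i, j, rfl⟩ := h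
    refine ⟨fun k => Nat.rec (i 0) (fun _ _ => z) k, fun _ => y, ?_⟩
    rw [ggsWord_zero, ggsWord_succ, ggsWord_zero]
    rfl
  | succ m ih =>
    obtain ⟨i, j, rfl⟩ := h
    rw [ggsWord_succ]
    have h1 := bw_prepend (i 0) (j 0)
      (ih (g := ggsWord p e (i ∘ Nat.succ) (j ∘ Nat.succ) m) ⟨_, _, rfl⟩)
    have heq : aPerm p ^ i 0 * bPerm p e ^ j 0 * ggsWord p e (i ∘ Nat.succ) (j ∘ Nat.succ) m *
        bPerm p e ^ y * aPerm p ^ z =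
        aPerm p ^ i 0 * (bPerm p e ^ j 0 *
          (ggsWord p e (i ∘ Nat.succ) (j ∘ Nat.succ) m * bPerm p e ^ y * aPerm p ^ z)) := by
      group
    rw [heq]
    exact h1

lemma bw_inv {g : Equiv.Perm (Vert (ZMod p))} {m : ℕ} (h : BW p e g m) : BW p e g⁻¹ m := by
  induction m generalizing g with
  | zero =>
    obtain ⟨i, j, rfl⟩ := h
    rw [ggsWord_zero, ← zpow_neg]
    exact bw_azpow _
  | succ m ih =>
    obtain ⟨i, j, rfl⟩ := h
    rw [ggsWord_succ]
    have h1 := bw_append (-(j 0)) (-(i 0))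
      (ih (g := ggsWord p e (i ∘ Nat.succ) (j ∘ Nat.succ) m) ⟨_, _, rfl⟩)
    have heq : (aPerm p ^ i 0 * bPerm p e ^ j 0 * ggsWord p e (i ∘ Nat.succ) (j ∘ Nat.succ) m)⁻¹ =
        (ggsWord p e (i ∘ Nat.succ) (j ∘ Nat.succ) m)⁻¹ * bPerm p e ^ (-(j 0)) *
          aPerm p ^ (-(i 0)) := by
      rw [zpow_neg, zpow_neg]
      group
    rw [heq]
    exact h1

lemma bw_mul {g h : Equiv.Perm (Vert (ZMod p))} {m m' : ℕ} (hg : BW p e g m)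
    (hh : BW p e h m') : BW p e (g * h) (m + m') := by
  induction m generalizing g with
  | zero =>
    obtain ⟨i, j, rfl⟩ := hg
    rw [ggsWord_zero, Nat.zero_add]
    exact bw_a_mul _ hh
  | succ m ih =>
    obtain ⟨i, j, rfl⟩ := hg
    rw [ggsWord_succ]
    have h1 := bw_prepend (i 0) (j 0)
      (ih (g := ggsWord p e (i ∘ Nat.succ) (j ∘ Nat.succ) m) ⟨_, _, rfl⟩)
    have heq : aPerm p ^ i 0 * bPerm p e ^ j 0 * ggsWord p e (i ∘ Nat.succ) (j ∘ Nat.succ) m * h =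
        aPerm p ^ i 0 * (bPerm p e ^ j 0 *
          (ggsWord p e (i ∘ Nat.succ) (j ∘ Nat.succ) m * h)) := by group
    rw [heq, show m + 1 + m' = m + m' + 1 by omega]
    exact h1

lemma mem_bw {g : Equiv.Perm (Vert (ZMod p))} (hg : g ∈ GGSGroup p e) :
    ∃ m, BW p e g m := by
  induction hg using Subgroup.closure_induction with
  | mem x hx =>
    rcases hx with rfl | rfl
    · exact ⟨0, by simpa using bw_azpow (e := e) 1⟩
    · refine ⟨1, fun _ => 0, fun _ => 1, ?_⟩
      rw [ggsWord_succ, ggsWord_zero]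
      simp
  | one => exact ⟨0, bw_one⟩
  | mul x y hx hy ihx ihy =>
    obtain ⟨m, hm⟩ := ihx
    obtain ⟨m', hm'⟩ := ihy
    exact ⟨m + m', bw_mul hm hm'⟩
  | inv x hx ihx =>
    obtain ⟨m, hm⟩ := ihx
    exact ⟨m, bw_inv hm⟩

lemma prod_range_succ_eq (c : ℕ → Equiv.Perm (Vert (ZMod p))) (n : ℕ) :
    ((List.range (n + 1)).map c).prod = c 0 * ((List.range n).map (c ∘ Nat.succ)).prod := by
  rw [List.range_succ_eq_map, List.map_cons, List.prod_cons, List.map_map]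

lemma comb (n : ℕ) (c : ℕ → Equiv.Perm (Vert (ZMod p)))
    (hc : ∀ k, (∃ z : ℤ, c k = aPerm p ^ z) ∨ (∃ z : ℤ, c k = bPerm p e ^ z)) :
    ∃ (z : ℤ) (m : ℕ) (g' : Equiv.Perm (Vert (ZMod p))),
      ((List.range n).map c).prod = bPerm p e ^ z * g' ∧ BW p e g' m ∧ 2 * m ≤ n ∧
        (z ≠ 0 → 2 * m + 1 ≤ n) := by
  induction n generalizing c with
  | zero =>
    exact ⟨0, 0, 1, by simp, bw_one, by omega, fun h => absurd rfl h⟩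
  | succ n ih =>
    obtain ⟨z, m, g', hprod, hbw, hm, hz⟩ := ih (c ∘ Nat.succ) (fun k => hc (k + 1))
    rcases hc 0 with ⟨z0, h0⟩ | ⟨z0, h0⟩
    · by_cases hz0 : z = 0
      · refine ⟨0, m, aPerm p ^ z0 * g', ?_, bw_a_mul _ hbw, by omega, fun h => absurd rfl h⟩
        rw [prod_range_succ_eq, hprod, h0, hz0]
        simp
      · refine ⟨0, m + 1, aPerm p ^ z0 * (bPerm p e ^ z * g'), ?_, bw_prepend _ _ hbw,
          by have := hz hz0; omega, fun h => absurd rfl h⟩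
        rw [prod_range_succ_eq, hprod, h0]
        simp [mul_assoc]
    · refine ⟨z0 + z, m, g', ?_, hbw, by omega, fun _ => by omega⟩
      rw [prod_range_succ_eq, hprod, h0, ← mul_assoc, ← zpow_add]

lemma comb' (n : ℕ) (c : ℕ → Equiv.Perm (Vert (ZMod p)))
    (hc : ∀ k, (∃ z : ℤ, c k = aPerm p ^ z) ∨ (∃ z : ℤ, c k = bPerm p e ^ z)) :
    ∃ m, BW p e (((List.range n).map c).prod) m ∧ 2 * m ≤ n + 1 := by
  obtain ⟨z, m, g', hp, hbw, hm, hz⟩ := comb n c hc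
  by_cases h0 : z = 0
  · refine ⟨m, ?_, by omega⟩
    rw [hp, h0, zpow_zero, one_mul]
    exact hbw
  · refine ⟨m + 1, ?_, by have := hz h0; omega⟩
    rw [hp]
    exact bw_bzpow_mul _ hbw

end AuxLemmas3

section AuxLemmas4

open Equiv List

variable {p : ℕ} {e : Fin (p - 1) → ZMod p}

lemma sect_azpow (z : ℤ) (y : ZMod p) : sect (aPerm p ^ z) [y] = 1 := by
  refine sect_eq _ _ _ (fun w => ?_)
  have h1 : ([y] : Vert (ZMod p)) ++ w = y :: w := rfl
  have h2 : (aPerm p ^ z) [y] = [y + z] := aPerm_zpow_cons z y []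
  rw [h1, aPerm_zpow_cons, h2]
  rfl

lemma sect_b (y : ZMod p) :
    sect (bPerm p e) [y] =
      if h : y.val < p - 1 then aPerm p ^ ((e ⟨y.val, h⟩).val) else bPerm p e := by
  by_cases h : y.val < p - 1
  · rw [dif_pos h]
    refine sect_eq _ _ _ (fun w => ?_)
    rw [bPerm_fix]
    show bFun p e (y :: w) = [y] ++ (aPerm p ^ (e ⟨y.val, h⟩).val) w
    simp only [bFun, dif_pos h]
    rfl
  · rw [dif_neg h]
    refine sect_eq _ _ _ (fun w => ?_)
    rw [bPerm_fix]
    show bFun p e (y :: w) = [y] ++ bFun p e w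
    simp only [bFun, dif_neg h]
    rfl

lemma aPerm_mem_GGS : aPerm p ∈ GGSGroup p e :=
  Subgroup.subset_closure (Set.mem_insert _ _)

lemma bPerm_mem_GGS : bPerm p e ∈ GGSGroup p e :=
  Subgroup.subset_closure (Set.mem_insert_of_mem _ rfl)

lemma ggsWord_mem (i j : ℕ → ℤ) (n : ℕ) : ggsWord p e i j n ∈ GGSGroup p e := by
  refine Subgroup.mul_mem _ (list_prod_mem fun x hx => ?_) (zpow_mem aPerm_mem_GGS _)
  simp only [List.mem_map, List.mem_range] at hx
  obtain ⟨k, _, rfl⟩ := hx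
  exact Subgroup.mul_mem _ (zpow_mem aPerm_mem_GGS _) (zpow_mem bPerm_mem_GGS _)

lemma bPerm_zpow_fix (z : ℤ) (y : ZMod p) : (bPerm p e ^ z) [y] = [y] :=
  perm_fix_zpow (bPerm_fix y) z

lemma sect_ggsWord (n : ℕ) (i j : ℕ → ℤ) (x : ZMod p) :
    ∃ c : ℕ → Equiv.Perm (Vert (ZMod p)),
      (∀ k, (∃ z : ℤ, c k = aPerm p ^ z) ∨ (∃ z : ℤ, c k = bPerm p e ^ z)) ∧
      sect (ggsWord p e i j n) [x] = ((List.range n).map c).prod := by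
  induction n generalizing i j x with
  | zero =>
    refine ⟨fun _ => 1, fun k => Or.inl ⟨0, (zpow_zero _).symm⟩, ?_⟩
    rw [ggsWord_zero, sect_azpow]
    simp
  | succ n ih =>
    obtain ⟨c', hc', hsect⟩ := ih (i ∘ Nat.succ) (j ∘ Nat.succ) x
    set r := ggsWord p e (i ∘ Nat.succ) (j ∘ Nat.succ) n with hr
    have hrG := ggsWord_mem (p := p) (e := e) (i ∘ Nat.succ) (j ∘ Nat.succ) n
    have hr_good : r ∈ goodSub (ZMod p) := (GGS_le_good_shift hrG).1
    obtain ⟨cr, hcr⟩ := (GGS_le_good_shift hrG).2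
    have ha_good : aPerm p ^ i 0 ∈ goodSub (ZMod p) := zpow_mem aPerm_mem_good _
    have hb_good : bPerm p e ^ j 0 ∈ goodSub (ZMod p) := zpow_mem bPerm_mem_good _
    set s0 := sect (bPerm p e ^ j 0) [x + cr] with hs0
    have e1 : sect (ggsWord p e i j (n + 1)) [x] = s0 * sect r [x] := by
      rw [ggsWord_succ, ← hr, sect_mul (Subgroup.mul_mem _ ha_good hb_good) hr_good,
        sect_mul ha_good hb_good, hcr, bPerm_zpow_fix, sect_azpow, one_mul]
    have hspec0 : (∃ z : ℤ, s0 = aPerm p ^ z) ∨ (∃ z : ℤ, s0 = bPerm p e ^ z) := by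
      rw [hs0, sect_zpow bPerm_mem_good (bPerm_fix (x + cr)), sect_b]
      by_cases h : (x + cr).val < p - 1
      · rw [dif_pos h]
        exact Or.inl ⟨((e ⟨(x + cr).val, h⟩).val : ℤ) * j 0, by
          rw [← zpow_natCast, ← zpow_mul]⟩
      · rw [dif_neg h]
        exact Or.inr ⟨j 0, rfl⟩
    refine ⟨fun k => Nat.rec s0 (fun k' _ => c' k') k, fun k => ?_, ?_⟩
    · cases k with
      | zero => exact hspec0
      | succ k => exact hc' k
    · rw [e1, hsect, prod_range_succ_eq]
      rfl

end AuxLemmas4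

/-- Lemma 4.10: for a proper type II subgroup `H` of a torsion GGS group generated
by a finite set `S` with maximal `b`-length `M`, for every first-level vertex `v`
the subgroup `φ_v(H)` is generated by `φ_v(S)`, whose elements have `b`-length at
most `(M+1)/2` (stated multiplied by 2); in particular, strictly less than `M`
when `M > 1`. -/
theorem statement14 (p : ℕ) (hp : p.Prime) (hodd : Odd p)
    (e : Fin (p - 1) → ZMod p) (he : e ≠ 0)
    (htor : ∀ g ∈ GGSGroup p e, IsOfFinOrder g)
    (H : Subgroup (Equiv.Perm (Vert (ZMod p)))) (hHG : H < GGSGroup p e)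
    (hII : TypeII p e H)
    (S : Set (Equiv.Perm (Vert (ZMod p)))) (hSfin : S.Finite)
    (hSgen : Subgroup.closure S = H)
    (M : ℕ) (hM : IsGreatest (bLen p e '' S) M) :
    ∀ v : Vert (ZMod p), v.length = 1 →
      sectGrp H v = Subgroup.closure ((fun g => sect g v) '' S) ∧
      (∀ g ∈ (fun g => sect g v) '' S, 2 * bLen p e g ≤ M + 1) ∧
      (1 < M → ∀ g ∈ (fun g => sect g v) '' S, bLen p e g < M) := by
  intro v hv
  obtain ⟨x, rfl⟩ := List.length_eq_one_iff.mp hv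
  have hHG' : H ≤ GGSGroup p e := hHG.le
  obtain ⟨j, hj1, heq⟩ := hII
  have hfix : H ≤ stabSet ⊤ (level (ZMod p) 1) := by
    have h1 : H ≤ Subgroup.closure {bPerm p e ^ j} ⊔ GGSDerived p e := heq ▸ le_sup_left
    refine h1.trans (sup_le ?_ derived_le_stabL1)
    rw [Subgroup.closure_le]
    rintro g rfl
    exact mem_stabL1 fun y => perm_fix_pow (bPerm_fix y) j
  have key : ∀ g ∈ S, 2 * bLen p e (sect g [x]) ≤ bLen p e g + 1 := by
    intro g hgS
    have hgH : g ∈ H := hSgen ▸ Subgroup.subset_closure hgS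
    have hgG : g ∈ GGSGroup p e := hHG' hgH
    obtain ⟨m0, hm0⟩ := mem_bw hgG
    have hne : {n | bWordLe p e g n}.Nonempty := ⟨m0, hm0⟩
    have hmem : bWordLe p e g (bLen p e g) := by rw [bLen]; exact Nat.sInf_mem hne
    obtain ⟨i, jj, hw⟩ := hmem
    have hw' : g = ggsWord p e i jj (bLen p e g) := hw
    obtain ⟨c, hc, hsect⟩ := sect_ggsWord (e := e) (bLen p e g) i jj x
    rw [← hw'] at hsect
    obtain ⟨m, hbw, hm⟩ := comb' _ c hc
    rw [← hsect] at hbw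
    have hle : bLen p e (sect g [x]) ≤ m := Nat.sInf_le hbw
    omega
  refine ⟨?_, ?_, ?_⟩
  · rw [sectGrp]
    apply le_antisymm
    · rw [Subgroup.closure_le]
      rintro _ ⟨g, hgH, rfl⟩
      have hg2 : g ∈ Subgroup.closure S := by rw [hSgen]; exact hgH
      clear hgH
      induction hg2 using Subgroup.closure_induction with
      | mem y hy => exact Subgroup.subset_closure ⟨y, hy, rfl⟩
      | one =>
        show sect 1 [x] ∈ _
        rw [sect_one]
        exact Subgroup.one_mem _
      | mul y z hy hz ihy ihz =>
        have hyH : y ∈ H := by rw [← hSgen]; exact hy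
        have hzH : z ∈ H := by rw [← hSgen]; exact hz
        show sect (y * z) [x] ∈ _
        rw [sect_mul (GGS_le_good_shift (hHG' hyH)).1 (GGS_le_good_shift (hHG' hzH)).1,
          stabL1_apply (hfix hzH) x]
        exact Subgroup.mul_mem _ ihy ihz
      | inv y hy ihy =>
        have hyH : y ∈ H := by rw [← hSgen]; exact hy
        show sect y⁻¹ [x] ∈ _
        rw [sect_inv (GGS_le_good_shift (hHG' hyH)).1 (stabL1_apply (hfix hyH) x)]
        exact Subgroup.inv_mem _ ihy
    · refine Subgroup.closure_mono (Set.image_mono ?_)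
      intro s hs
      exact hSgen ▸ Subgroup.subset_closure hs
  · rintro _ ⟨g, hgS, rfl⟩
    have h2 := key g hgS
    have h3 : bLen p e g ≤ M := hM.2 ⟨g, hgS, rfl⟩
    show 2 * bLen p e (sect g [x]) ≤ M + 1
    omega
  · rintro hM1 _ ⟨g, hgS, rfl⟩
    have h2 := key g hgS
    have h3 : bLen p e g ≤ M := hM.2 ⟨g, hgS, rfl⟩
    show bLen p e (sect g [x]) < M
    omega
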